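/- arXiv:1708.02185 — 2 statements merged into one kernel-verified Lean document; each statement's English description precedes it below -/
import Mathlib

section
/- For m ≥ 3 and d ≥ m: every finite family of axis-parallel m-dimensional boxes in ℝ^d is 2-pierceable if and only if every subfamily of cardinality 3m (for m odd) respectively 3m − 1 (for m even) is 2-pierceable. -/
open Set

/-- An axis-parallel box in `ℝ^d`: a product of nonempty closed intervals. -/
def IsBoxIn (d : ℕ) (s : Set (Fin d → ℝ)) : Prop :=
  ∃ lo hi : Fin d → ℝ, (∀ i, lo i ≤ hi i) ∧
    s = {x | ∀ i, x i ∈ Set.Icc (lo i) (hi i)}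

/-- A `p`-box in `ℝ^d`: a product of nonempty closed intervals, exactly `d - p`
of which are degenerate (single points). -/
def IsPBoxIn (p d : ℕ) (s : Set (Fin d → ℝ)) : Prop :=
  ∃ lo hi : Fin d → ℝ, (∀ i, lo i ≤ hi i) ∧
    {i : Fin d | lo i = hi i}.ncard = d - p ∧
    s = {x | ∀ i, x i ∈ Set.Icc (lo i) (hi i)}

/-- A graph is an interval graph if it is the intersection graph of a family of
closed real intervals. -/
def IsIntervalGraph {V : Type*} (G : SimpleGraph V) : Prop :=
  ∃ a b : V → ℝ, (∀ v, a v ≤ b v) ∧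
    ∀ u v : V, u ≠ v →
      (G.Adj u v ↔ (Set.Icc (a u) (b u) ∩ Set.Icc (a v) (b v)).Nonempty)

/-- `G` is the intersection graph of a family of `p`-boxes in `ℝ^d`. -/
def RealizableAsPBoxes {V : Type*} (p d : ℕ) (G : SimpleGraph V) : Prop :=
  ∃ B : V → Set (Fin d → ℝ), (∀ v, IsPBoxIn p d (B v)) ∧
    ∀ u v : V, u ≠ v → (G.Adj u v ↔ (B u ∩ B v).Nonempty)

/-- `G` is the intersection graph of a family of (full) axis-parallel boxes in `ℝ^d`. -/
def RealizableAsBoxes {V : Type*} (d : ℕ) (G : SimpleGraph V) : Prop :=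
  ∃ B : V → Set (Fin d → ℝ), (∀ v, IsBoxIn d (B v)) ∧
    ∀ u v : V, u ≠ v → (G.Adj u v ↔ (B u ∩ B v).Nonempty)

/-- The intersection graph of a family of sets in `ℝ^d`. -/
def intersectionGraph {ι : Type*} {d : ℕ} (B : ι → Set (Fin d → ℝ)) : SimpleGraph ι :=
  SimpleGraph.fromRel fun i j => (B i ∩ B j).Nonempty

/-- The family `B` can be pierced by at most `n` points. -/
def Pierceable {ι : Type*} {d : ℕ} (B : ι → Set (Fin d → ℝ)) (n : ℕ) : Prop :=
  ∃ P : Finset (Fin d → ℝ), P.card ≤ n ∧ ∀ i, ∃ p ∈ P, p ∈ B i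

/-- The subfamily of `B` indexed by `S` can be pierced by at most `n` points. -/
def PierceableOn {ι : Type*} {d : ℕ} (B : ι → Set (Fin d → ℝ)) (S : Finset ι) (n : ℕ) : Prop :=
  ∃ P : Finset (Fin d → ℝ), P.card ≤ n ∧ ∀ i ∈ S, ∃ p ∈ P, p ∈ B i

/-- The cycle graph on `s` vertices, with vertex set `ZMod s`. -/
def cyc (s : ℕ) : SimpleGraph (ZMod s) := SimpleGraph.fromRel fun i j => j = i + 1

/-- The boxicity of a graph, as an extended natural number. -/
noncomputable def boxicity {V : Type*} (G : SimpleGraph V) : ℕ∞ :=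
  sInf {n : ℕ∞ | ∃ k : ℕ, n = k ∧ RealizableAsBoxes k G}

/-- The `p`-boxicity of a graph: the least `d ≥ p` such that `G` is realizable as
`p`-boxes in `ℝ^d` (possibly `∞`). -/
noncomputable def pboxicity {V : Type*} (p : ℕ) (G : SimpleGraph V) : ℕ∞ :=
  sInf {n : ℕ∞ | ∃ k : ℕ, n = k ∧ p ≤ k ∧ RealizableAsPBoxes p k G}


namespace HellyAux

variable {ι : Type*}

def IsOddCW (Adj : ι → ι → Prop) (n : ℕ) : Prop :=
  Odd n ∧ ∃ v : ℕ → ι, v n = v 0 ∧ ∀ t, t < n → Adj (v t) (v (t + 1))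

lemma exists_pair {α : Type*} [Inhabited α] (P : Finset α) (h : P.card ≤ 2) :
    ∃ p q : α, ∀ x ∈ P, x = p ∨ x = q := by
  classical
  rcases P.eq_empty_or_nonempty with rfl | ⟨a, ha⟩
  · exact ⟨default, default, by simp⟩
  · rcases (P.erase a).eq_empty_or_nonempty with he | ⟨b, hb⟩
    · refine ⟨a, a, fun x hx => ?_⟩
      by_cases hxa : x = a
      · exact Or.inl hxa
      · exact absurd (Finset.mem_erase.2 ⟨hxa, hx⟩) (by simp [he])
    · refine ⟨a, b, fun x hx => ?_⟩
      by_cases hxa : x = a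
      · exact Or.inl hxa
      · have hcard : (P.erase a).card ≤ 1 := by
          have := Finset.card_erase_of_mem ha; omega
        exact Or.inr (Finset.card_le_one.mp hcard _ (Finset.mem_erase.2 ⟨hxa, hx⟩) _ hb)

lemma exists_induced_odd_cycle (Adj : ι → ι → Prop)
    (hsym : ∀ i j, Adj i j → Adj j i) (hirr : ∀ i, ¬ Adj i i)
    (hex : ∃ n, IsOddCW Adj n) :
    ∃ n, Odd n ∧ 3 ≤ n ∧ ∃ v : ℕ → ι, v n = v 0 ∧
      (∀ t, t < n → Adj (v t) (v (t + 1))) ∧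
      (∀ a b, a < b → b < n → v a ≠ v b) ∧
      (∀ a b, a < b → b < n → 2 ≤ b - a → b - a + 2 ≤ n → ¬ Adj (v a) (v b)) := by
  classical
  obtain ⟨n, ⟨hodd, v, hv0, hadj⟩, hmin⟩ :
      ∃ n, IsOddCW Adj n ∧ ∀ k, k < n → ¬ IsOddCW Adj k :=
    ⟨Nat.find hex, Nat.find_spec hex, fun k hk => Nat.find_min hex hk⟩
  have hne1 : n ≠ 1 := by
    intro h
    have hA := hadj 0 (by omega)
    have hv1 : v (0 + 1) = v 0 := by rw [show (0:ℕ) + 1 = n from by omega]; exact hv0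
    rw [hv1] at hA
    exact hirr _ hA
  have hn3 : 3 ≤ n := by have h := Nat.odd_iff.1 hodd; omega
  have hdist : ∀ a b, a < b → b < n → v a ≠ v b := by
    intro a b hab hbn heq
    have hsplit : Odd (b - a) ∨ Odd (n - (b - a)) := by
      have h := Nat.odd_iff.1 hodd
      rw [Nat.odd_iff, Nat.odd_iff]; omega
    rcases hsplit with h1 | h2
    · refine hmin (b - a) (by omega) ⟨h1, fun t => v (a + t), ?_, ?_⟩
      · beta_reduce
        rw [show a + (b - a) = b from by omega, show a + 0 = a from rfl]
        exact heq.symm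
      · intro t ht
        beta_reduce
        rw [show a + (t + 1) = a + t + 1 from by omega]
        exact hadj (a + t) (by omega)
    · refine hmin (n - (b - a)) (by omega)
        ⟨h2, fun t => v (if t < n - b then b + t else t - (n - b)), ?_, ?_⟩
      · beta_reduce
        simp only [if_neg (by omega : ¬ (n - (b - a) < n - b)), if_pos (by omega : (0:ℕ) < n - b)]
        rw [show n - (b - a) - (n - b) = a from by omega, show b + 0 = b from rfl]
        exact heq
      · intro t ht
        beta_reduce
        by_cases h1 : t + 1 < n - b
        · simp only [if_pos h1, if_pos (by omega : t < n - b)]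
          rw [show b + (t + 1) = b + t + 1 from by omega]
          exact hadj (b + t) (by omega)
        · by_cases h0 : t < n - b
          · simp only [if_pos h0, if_neg h1]
            have ha' := hadj (b + t) (by omega)
            rw [show b + t + 1 = n from by omega, hv0] at ha'
            rw [show t + 1 - (n - b) = 0 from by omega]
            exact ha'
          · simp only [if_neg h0, if_neg h1]
            rw [show t + 1 - (n - b) = t - (n - b) + 1 from by omega]
            exact hadj (t - (n - b)) (by omega)
  have hind : ∀ a b, a < b → b < n → 2 ≤ b - a → b - a + 2 ≤ n → ¬ Adj (v a) (v b) := by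
    intro a b hab hbn h2ab hban hA
    have hsplit : Odd (b - a + 1) ∨ Odd (n - (b - a) + 1) := by
      have h := Nat.odd_iff.1 hodd
      rw [Nat.odd_iff, Nat.odd_iff]; omega
    rcases hsplit with h1 | h2
    · refine hmin (b - a + 1) (by omega) ⟨h1, fun t => v (if t ≤ b - a then a + t else a), ?_, ?_⟩
      · beta_reduce
        simp only [if_neg (by omega : ¬ (b - a + 1 ≤ b - a)), if_pos (by omega : (0:ℕ) ≤ b - a)]
        rfl
      · intro t ht
        beta_reduce
        by_cases hta : t < b - a
        · simp only [if_pos (by omega : t ≤ b - a), if_pos (by omega : t + 1 ≤ b - a)]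
          rw [show a + (t + 1) = a + t + 1 from by omega]
          exact hadj (a + t) (by omega)
        · simp only [if_pos (by omega : t ≤ b - a), if_neg (by omega : ¬ (t + 1 ≤ b - a))]
          rw [show a + t = b from by omega]
          exact hsym _ _ hA
    · refine hmin (n - (b - a) + 1) (by omega)
        ⟨h2, fun t => v (if t < n - b then b + t else if t ≤ n - b + a then t - (n - b) else b), ?_, ?_⟩
      · beta_reduce
        simp only [if_neg (by omega : ¬ (n - (b - a) + 1 < n - b)),
          if_neg (by omega : ¬ (n - (b - a) + 1 ≤ n - b + a)), if_pos (by omega : (0:ℕ) < n - b)]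
        rfl
      · intro t ht
        beta_reduce
        by_cases hc1 : t + 1 < n - b
        · simp only [if_pos hc1, if_pos (by omega : t < n - b)]
          rw [show b + (t + 1) = b + t + 1 from by omega]
          exact hadj (b + t) (by omega)
        · by_cases hc0 : t < n - b
          · simp only [if_pos hc0, if_neg hc1, if_pos (by omega : t + 1 ≤ n - b + a)]
            have ha' := hadj (b + t) (by omega)
            rw [show b + t + 1 = n from by omega, hv0] at ha'
            rw [show t + 1 - (n - b) = 0 from by omega]
            exact ha'
          · by_cases hc2 : t < n - b + a
            · simp only [if_neg hc0, if_neg hc1, if_pos (by omega : t ≤ n - b + a),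
                if_pos (by omega : t + 1 ≤ n - b + a)]
              rw [show t + 1 - (n - b) = t - (n - b) + 1 from by omega]
              exact hadj (t - (n - b)) (by omega)
            · simp only [if_neg hc0, if_neg hc1, if_pos (by omega : t ≤ n - b + a),
                if_neg (by omega : ¬ (t + 1 ≤ n - b + a))]
              rw [show t - (n - b) = a from by omega]
              exact hA
  exact ⟨n, hodd, hn3, v, hv0, hadj, hdist, hind⟩



lemma cycle_core {m d n : ℕ} (hm : 3 ≤ m) (hd : m ≤ d) (hodd : Odd n) (hn : 3 ≤ n)
    (lo hi : ZMod n → Fin d → ℝ)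
    (hle : ∀ j k, lo j k ≤ hi j k)
    (hdeg : ∀ j, ({k : Fin d | lo j k = hi j k} : Set (Fin d)).ncard = d - m)
    (hcons : ∀ j : ZMod n, ∃ k, hi j k < lo (j + 1) k ∨ hi (j + 1) k < lo j k)
    (hfar : ∀ j j' : ZMod n, j' ≠ j → j' ≠ j + 1 → j ≠ j' + 1 →
      ∀ k, lo j k ≤ hi j' k ∧ lo j' k ≤ hi j k) :
    n ≤ 3 * m := by
  classical
  by_contra hcon
  push_neg at hcon
  have h11 : 11 ≤ n := by have h := Nat.odd_iff.1 hodd; omega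
  haveI : NeZero n := ⟨by omega⟩
  have hcast : ∀ x y : ℕ, x < n → y < n → (((x : ℕ) : ZMod n) = ((y : ℕ) : ZMod n) ↔ x = y) := by
    intro x y hx hy
    constructor
    · intro h
      have h2 := congrArg ZMod.val h
      rwa [ZMod.val_cast_of_lt hx, ZMod.val_cast_of_lt hy] at h2
    · rintro rfl; rfl
  have hshift : ∀ (e : ZMod n) (x y : ℕ), x < n → y < n →
      (e + ((x : ℕ) : ZMod n) = e + ((y : ℕ) : ZMod n) ↔ x = y) := by
    intro e x y hx hy
    rw [add_right_inj]
    exact hcast x y hx hy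
  set E : Fin d → Finset (ZMod n) :=
    fun k => Finset.univ.filter (fun j => hi j k < lo (j + 1) k ∨ hi (j + 1) k < lo j k) with hE
  set X : Fin d → Finset (ZMod n) :=
    fun k => Finset.univ.filter (fun j => lo j k = hi j k) with hX
  have hmemE : ∀ k j, j ∈ E k ↔ (hi j k < lo (j + 1) k ∨ hi (j + 1) k < lo j k) := by
    intro k j; simp [hE]
  have hmemX : ∀ k j, j ∈ X k ↔ lo j k = hi j k := by
    intro k j; simp [hX]
  -- F3 : any two disjointness-edges in one coordinate are within distance 2
  have hF3 : ∀ (k : Fin d) (a b : ZMod n), a ∈ E k → b ∈ E k →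
      ∃ z : ℕ, z ≤ 4 ∧ b + 2 = a + ((z : ℕ) : ZMod n) := by
    intro k a b ha hb
    by_contra hz
    push_neg at hz
    have key : ∀ (u w x y : ZMod n), hi u k < lo w k → hi x k < lo y k →
        (∀ kk, lo u kk ≤ hi y kk ∧ lo y kk ≤ hi u kk) →
        (∀ kk, lo w kk ≤ hi x kk ∧ lo x kk ≤ hi w kk) → False := by
      intro u w x y h1 h2 huy hwx
      have a1 := (huy k).2
      have a2 := (hwx k).1
      linarith
    have ne1 : b ≠ a := fun h => hz 2 (by norm_num) (by rw [h]; push_cast; ring)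
    have ne2 : b ≠ a + 1 := fun h => hz 3 (by norm_num) (by rw [h]; push_cast; ring)
    have ne3 : a ≠ b + 1 := fun h => hz 1 (by norm_num) (by rw [h]; push_cast; ring)
    have ne4 : b + 1 ≠ a := fun h => hz 1 (by norm_num) (by rw [← h]; push_cast; ring)
    have ne5 : b + 1 ≠ a + 1 := fun h => ne1 (add_right_cancel h)
    have ne6 : a ≠ b + 2 := fun h => hz 0 (by norm_num) (by rw [h]; push_cast; ring)
    have ne7 : b ≠ a + 2 := fun h => hz 4 (by norm_num) (by rw [h]; push_cast; ring)
    have ne8 : a + 1 ≠ b + 1 := fun h => ne5 h.symm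
    have ne9 : b + 1 ≠ a + 2 := fun h => hz 3 (by norm_num)
      (by rw [show b + (2 : ZMod n) = (b + 1) + 1 from by ring, h]; push_cast; ring)
    have ne10 : a + 1 ≠ b + 2 := fun h => hz 1 (by norm_num) (by rw [← h]; push_cast; ring)
    have P1 := hfar a b ne1 ne2 ne3
    have P2 := hfar a (b + 1) ne4 ne5 (fun h => ne6 (h.trans (by ring)))
    have P3 := hfar (a + 1) b ne2 (fun h => ne7 (h.trans (by ring))) ne8
    have P4 := hfar (a + 1) (b + 1) ne5 (fun h => ne9 (h.trans (by ring)))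
      (fun h => ne10 (h.trans (by ring)))
    rcases (hmemE k a).1 ha with hA | hA <;> rcases (hmemE k b).1 hb with hB | hB
    · exact key a (a + 1) b (b + 1) hA hB P2 P3
    · exact key a (a + 1) (b + 1) b hA hB P1 P4
    · exact key (a + 1) a b (b + 1) hA hB P4 P1
    · exact key (a + 1) a (b + 1) b hA hB P3 P2
  -- F5 : a degenerate vertex is close to every disjointness-edge in that coordinate
  have hF5 : ∀ (k : Fin d) (j e : ZMod n), j ∈ X k → e ∈ E k →
      ∃ z : ℕ, z ≤ 3 ∧ j + 1 = e + ((z : ℕ) : ZMod n) := by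
    intro k j e hj he
    by_contra hz
    push_neg at hz
    have me1 : e ≠ j := fun h => hz 1 (by norm_num) (by rw [h]; push_cast; ring)
    have me2 : e ≠ j + 1 := fun h => hz 0 (by norm_num) (by rw [h]; push_cast; ring)
    have me3 : j ≠ e + 1 := fun h => hz 2 (by norm_num) (by rw [h]; push_cast; ring)
    have me4 : e + 1 ≠ j := fun h => me3 h.symm
    have me5 : e + 1 ≠ j + 1 := fun h => me1 (add_right_cancel h)
    have me6 : j ≠ e + 1 + 1 := fun h => hz 3 (by norm_num) (by rw [h]; push_cast; ring)
    have Q1 := hfar j e me1 me2 me3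
    have Q2 := hfar j (e + 1) me4 me5 me6
    have hjj := (hmemX k j).1 hj
    rcases (hmemE k e).1 he with hE1 | hE1
    · have a1 := (Q2 k).2
      have a2 := (Q1 k).1
      linarith
    · have a1 := (Q1 k).2
      have a2 := (Q2 k).1
      linarith
  -- window lemma
  have hwin : ∀ k : Fin d, (E k).Nonempty →
      ∃ c : ZMod n, ∀ b ∈ E k, ∃ z : ℕ, z ≤ 2 ∧ b = c + ((z : ℕ) : ZMod n) := by
    rintro k ⟨a, ha⟩
    have hQ : ∃ z : ℕ, ∃ b ∈ E k, b + 2 = a + ((z : ℕ) : ZMod n) :=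
      ⟨2, a, ha, by push_cast; ring⟩
    obtain ⟨b0, hb0, hb0eq⟩ := Nat.find_spec hQ
    set z0 := Nat.find hQ with hz0def
    refine ⟨b0, fun b hb => ?_⟩
    obtain ⟨zb, hzb4, hzbeq⟩ := hF3 k a b ha hb
    have hz0le : z0 ≤ zb := Nat.find_min' hQ ⟨b, hb, hzbeq⟩
    have hkey : b + 2 = b0 + 2 + (((zb - z0 : ℕ) : ℕ) : ZMod n) := by
      rw [hzbeq]
      rw [show ((zb : ℕ) : ZMod n) = ((z0 : ℕ) : ZMod n) + (((zb - z0 : ℕ) : ℕ) : ZMod n) from by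
        rw [← Nat.cast_add]; congr 1; omega]
      rw [← add_assoc, ← hb0eq]
    have hb' : b = b0 + (((zb - z0 : ℕ) : ℕ) : ZMod n) := by
      have h2 : b + 2 = b0 + (((zb - z0 : ℕ) : ℕ) : ZMod n) + 2 := by rw [hkey]; ring
      exact add_right_cancel h2
    obtain ⟨z', hz'4, hz'eq⟩ := hF3 k b0 b hb0 hb
    have h3 : b + 2 = b0 + (((zb - z0 + 2 : ℕ) : ℕ) : ZMod n) := by
      rw [hb']; push_cast; ring
    have heqz : z' = zb - z0 + 2 :=
      (hshift b0 z' (zb - z0 + 2) (by omega) (by omega)).1 (hz'eq.symm.trans h3)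
    exact ⟨zb - z0, by omega, hb'⟩
  -- per-coordinate bound
  have cins : ∀ (x : ZMod n) (s : Finset (ZMod n)), (insert x s).card ≤ s.card + 1 :=
    fun x s => Finset.card_insert_le x s
  have himg : ∀ (k : Fin d) (T : Finset (ZMod n)),
      (X k).image (· + (1 : ZMod n)) ⊆ T → (X k).card ≤ T.card := by
    intro k T hT
    rw [← Finset.card_image_of_injective (X k) (add_left_injective (1 : ZMod n))]
    exact Finset.card_le_card hT
  have hperk : ∀ k : Fin d, (E k).Nonempty → (E k).card ≤ 3 ∧ (E k).card + (X k).card ≤ 5 := by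
    intro k hk
    obtain ⟨c, hc⟩ := hwin k hk
    have hsub3 : E k ⊆ {c, c + 1, c + 2} := by
      intro b hb
      obtain ⟨z, hz2, rfl⟩ := hc b hb
      interval_cases z <;> simp
    have hcard3 : (E k).card ≤ 3 := by
      refine le_trans (Finset.card_le_card hsub3) ?_
      have h1 := cins c {c + 1, c + 2}
      have h2 := cins (c + 1) ({c + 2} : Finset (ZMod n))
      have h3 : ({c + 2} : Finset (ZMod n)).card = 1 := Finset.card_singleton _
      omega
    by_cases hcc : c ∈ E k ∧ c + 2 ∈ E k
    · have hXsub : (X k).image (· + (1 : ZMod n)) ⊆ {c + 2, c + 3} := by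
        intro y hy
        obtain ⟨j, hj, rfl⟩ := Finset.mem_image.1 hy
        obtain ⟨z1, hz1, he1⟩ := hF5 k j c hj hcc.1
        obtain ⟨z2, hz2, he2⟩ := hF5 k j (c + 2) hj hcc.2
        have hz12 : z1 = 2 + z2 :=
          (hshift c z1 (2 + z2) (by omega) (by omega)).1 (by rw [← he1, he2]; push_cast; ring)
        have hz1b : 2 ≤ z1 := by omega
        beta_reduce
        rw [he1]
        interval_cases z1 <;> simp
      have hX2 : (X k).card ≤ 2 := by
        refine le_trans (himg k _ hXsub) ?_
        have h1 := cins (c + 2) ({c + 3} : Finset (ZMod n))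
        have h3 : ({c + 3} : Finset (ZMod n)).card = 1 := Finset.card_singleton _
        omega
      exact ⟨hcard3, by omega⟩
    · have hsub2 : ∃ f : ZMod n, E k ⊆ {f, f + 1} := by
        by_cases hc0 : c ∈ E k
        · refine ⟨c, fun b hb => ?_⟩
          obtain ⟨z, hz2, rfl⟩ := hc b hb
          have hz2' : z ≠ 2 := by
            intro h
            subst h
            refine hcc ⟨hc0, ?_⟩
            have hcast2 : c + (((2 : ℕ) : ℕ) : ZMod n) = c + 2 := by push_cast; ring
            rwa [hcast2] at hb
          interval_cases z
          · simp
          · simp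
          · exact absurd rfl hz2'
        · refine ⟨c + 1, fun b hb => ?_⟩
          obtain ⟨z, hz2, rfl⟩ := hc b hb
          have hz0' : z ≠ 0 := by
            intro h
            subst h
            have hcast0 : c + (((0 : ℕ) : ℕ) : ZMod n) = c := by push_cast; ring
            rw [hcast0] at hb
            exact hc0 hb
          interval_cases z
          · exact absurd rfl hz0'
          · simp
          · have hcast2 : c + (((2 : ℕ) : ℕ) : ZMod n) = c + 1 + 1 := by push_cast; ring
            rw [hcast2]
            simp
      obtain ⟨f, hf2⟩ := hsub2
      have hcard2 : (E k).card ≤ 2 := by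
        refine le_trans (Finset.card_le_card hf2) ?_
        have h1 := cins f ({f + 1} : Finset (ZMod n))
        have h3 : ({f + 1} : Finset (ZMod n)).card = 1 := Finset.card_singleton _
        omega
      by_cases hff : f ∈ E k ∧ f + 1 ∈ E k
      · have hXsub : (X k).image (· + (1 : ZMod n)) ⊆ {f + 1, f + 2, f + 3} := by
          intro y hy
          obtain ⟨j, hj, rfl⟩ := Finset.mem_image.1 hy
          obtain ⟨z1, hz1, he1⟩ := hF5 k j f hj hff.1
          obtain ⟨z2, hz2, he2⟩ := hF5 k j (f + 1) hj hff.2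
          have hz12 : z1 = 1 + z2 :=
            (hshift f z1 (1 + z2) (by omega) (by omega)).1 (by rw [← he1, he2]; push_cast; ring)
          have hz1b : 1 ≤ z1 := by omega
          beta_reduce
          rw [he1]
          interval_cases z1 <;> simp
        have hX3 : (X k).card ≤ 3 := by
          refine le_trans (himg k _ hXsub) ?_
          have h1 := cins (f + 1) {f + 2, f + 3}
          have h2 := cins (f + 2) ({f + 3} : Finset (ZMod n))
          have h3 : ({f + 3} : Finset (ZMod n)).card = 1 := Finset.card_singleton _
          omega
        exact ⟨hcard3, by omega⟩
      · have hcard1 : (E k).card ≤ 1 := by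
          rcases not_and_or.1 hff with h | h
          · have hsub : E k ⊆ {f + 1} := by
              intro b hb
              rcases Finset.mem_insert.1 (hf2 hb) with rfl | hbb
              · exact absurd hb h
              · exact hbb
            exact le_trans (Finset.card_le_card hsub) (by simp)
          · have hsub : E k ⊆ {f} := by
              intro b hb
              rcases Finset.mem_insert.1 (hf2 hb) with rfl | hbb
              · exact Finset.mem_singleton_self _
              · rw [Finset.mem_singleton] at hbb
                subst hbb
                exact absurd hb h
            exact le_trans (Finset.card_le_card hsub) (by simp)
        obtain ⟨e, he⟩ := hk
        have hXsub : (X k).image (· + (1 : ZMod n)) ⊆ {e, e + 1, e + 2, e + 3} := by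
          intro y hy
          obtain ⟨j, hj, rfl⟩ := Finset.mem_image.1 hy
          obtain ⟨z, hz3, heq⟩ := hF5 k j e hj he
          beta_reduce
          rw [heq]
          interval_cases z <;> simp
        have hX4 : (X k).card ≤ 4 := by
          refine le_trans (himg k _ hXsub) ?_
          have h1 := cins e {e + 1, e + 2, e + 3}
          have h2 := cins (e + 1) {e + 2, e + 3}
          have h3 := cins (e + 2) ({e + 3} : Finset (ZMod n))
          have h4 : ({e + 3} : Finset (ZMod n)).card = 1 := Finset.card_singleton _
          omega
        exact ⟨hcard3, by omega⟩
  -- counting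
  set A : Finset (Fin d) := Finset.univ.filter (fun k => (E k).Nonempty) with hA
  have hcardn : Fintype.card (ZMod n) = n := ZMod.card n
  have htd : A.card ≤ d := by
    refine le_trans (Finset.card_le_card (Finset.filter_subset _ _)) ?_
    simp
  have hcover : ∀ j : ZMod n, ∃ k, j ∈ E k := by
    intro j
    obtain ⟨k, hk⟩ := hcons j
    exact ⟨k, (hmemE k j).2 hk⟩
  have hsumE : n ≤ ∑ k : Fin d, (E k).card := by
    have hsub : (Finset.univ : Finset (ZMod n)) ⊆ Finset.univ.biUnion E := by
      intro j _
      obtain ⟨k, hk⟩ := hcover j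
      exact Finset.mem_biUnion.2 ⟨k, Finset.mem_univ k, hk⟩
    calc n = (Finset.univ : Finset (ZMod n)).card := by rw [Finset.card_univ, hcardn]
      _ ≤ (Finset.univ.biUnion E).card := Finset.card_le_card hsub
      _ ≤ ∑ k : Fin d, (E k).card := Finset.card_biUnion_le
  have hsumX : ∑ k : Fin d, (X k).card = n * (d - m) := by
    have hXj : ∀ j : ZMod n, (Finset.univ.filter (fun k : Fin d => lo j k = hi j k)).card = d - m := by
      intro j
      have h1 : ({k : Fin d | lo j k = hi j k} : Set (Fin d)) =
          ↑(Finset.univ.filter (fun k : Fin d => lo j k = hi j k)) := by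
        ext kk; simp
      have h2 := hdeg j
      rw [h1, Set.ncard_coe_finset] at h2
      exact h2
    calc ∑ k : Fin d, (X k).card
        = ∑ k : Fin d, ∑ j : ZMod n, if lo j k = hi j k then 1 else 0 := by
          refine Finset.sum_congr rfl fun k _ => ?_
          rw [hX]
          exact Finset.card_filter _ _
      _ = ∑ j : ZMod n, ∑ k : Fin d, if lo j k = hi j k then 1 else 0 := Finset.sum_comm
      _ = ∑ j : ZMod n, (d - m) := by
          refine Finset.sum_congr rfl fun j _ => ?_
          rw [← hXj j]
          exact (Finset.card_filter _ _).symm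
      _ = n * (d - m) := by
          rw [Finset.sum_const, Finset.card_univ, hcardn, smul_eq_mul]
  have hAmem : ∀ k, k ∈ A ↔ (E k).Nonempty := by intro k; simp [hA]
  have hsum3 : ∑ k : Fin d, (E k).card ≤ 3 * A.card := by
    rw [← Finset.sum_filter_add_sum_filter_not Finset.univ (fun k => (E k).Nonempty)
      (fun k => (E k).card)]
    have h1 : ∑ k ∈ Finset.univ.filter (fun k => (E k).Nonempty), (E k).card ≤ A.card * 3 := by
      have := Finset.sum_le_card_nsmul (Finset.univ.filter (fun k => (E k).Nonempty))
        (fun k => (E k).card) 3 ?_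
      · rwa [smul_eq_mul, ← hA] at this
      · intro k hk
        exact (hperk k ((hAmem k).1 (by rwa [hA]))).1
    have h2 : ∑ k ∈ Finset.univ.filter (fun k => ¬ (E k).Nonempty), (E k).card = 0 := by
      refine Finset.sum_eq_zero fun k hk => ?_
      have hkk := (Finset.mem_filter.1 hk).2
      rw [Finset.not_nonempty_iff_eq_empty.1 hkk]
      rfl
    omega
  have hmain : ∑ k : Fin d, ((E k).card + (X k).card) ≤ 5 * A.card + (d - A.card) * n := by
    rw [← Finset.sum_filter_add_sum_filter_not Finset.univ (fun k => (E k).Nonempty)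
      (fun k => (E k).card + (X k).card)]
    have h1 : ∑ k ∈ Finset.univ.filter (fun k => (E k).Nonempty),
        ((E k).card + (X k).card) ≤ A.card * 5 := by
      have := Finset.sum_le_card_nsmul (Finset.univ.filter (fun k => (E k).Nonempty))
        (fun k => (E k).card + (X k).card) 5 ?_
      · rwa [smul_eq_mul, ← hA] at this
      · intro k hk
        exact (hperk k ((hAmem k).1 (by rwa [hA]))).2
    have h2 : ∑ k ∈ Finset.univ.filter (fun k => ¬ (E k).Nonempty),
        ((E k).card + (X k).card) ≤ (d - A.card) * n := by
      have hcardc : (Finset.univ.filter (fun k : Fin d => ¬ (E k).Nonempty)).card = d - A.card := by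
        have h := Finset.card_filter_add_card_filter_not
          (s := (Finset.univ : Finset (Fin d))) (p := fun k => (E k).Nonempty)
        rw [Finset.card_univ, Fintype.card_fin] at h
        rw [hA]
        omega
      have hb : ∀ k ∈ Finset.univ.filter (fun k : Fin d => ¬ (E k).Nonempty),
          (E k).card + (X k).card ≤ n := by
        intro k hk
        have hkk := (Finset.mem_filter.1 hk).2
        have he0 : (E k).card = 0 := by
          rw [Finset.not_nonempty_iff_eq_empty.1 hkk]; rfl
        have hx : (X k).card ≤ n := by
          refine le_trans (Finset.card_le_univ _) ?_
          exact le_of_eq hcardn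
        omega
      have := Finset.sum_le_card_nsmul _ _ n hb
      rwa [smul_eq_mul, hcardc] at this
    omega
  -- final arithmetic
  have hsplitsum : ∑ k : Fin d, ((E k).card + (X k).card)
      = (∑ k : Fin d, (E k).card) + ∑ k : Fin d, (X k).card := Finset.sum_add_distrib
  set t := A.card with htdef
  have hfinal : n + n * (d - m) ≤ 5 * t + (d - t) * n := by
    calc n + n * (d - m) ≤ (∑ k : Fin d, (E k).card) + ∑ k : Fin d, (X k).card := by
          rw [hsumX]; exact Nat.add_le_add_right hsumE _
      _ = ∑ k : Fin d, ((E k).card + (X k).card) := hsplitsum.symm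
      _ ≤ 5 * t + (d - t) * n := hmain
  have htm : m + 1 ≤ t := by omega
  have e1 : n * (d - m) + n * m = n * d := by
    rw [← Nat.mul_add]
    congr 1
    omega
  have e2 : (d - t) * n + t * n = d * n := by
    rw [← Nat.add_mul]
    congr 1
    omega
  have step1 : n + n * (d - m) + (n * m + t * n) ≤ 5 * t + (d - t) * n + (n * m + t * n) :=
    Nat.add_le_add_right hfinal _
  have step2 : n + n * d + t * n ≤ 5 * t + d * n + n * m := by
    have l1 : n + n * (d - m) + (n * m + t * n) = n + (n * (d - m) + n * m) + t * n := by ring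
    have l2 : 5 * t + (d - t) * n + (n * m + t * n) = 5 * t + ((d - t) * n + t * n) + n * m := by
      ring
    rw [l1, e1] at step1
    rw [l2, e2] at step1
    exact step1
  have key : n + t * n ≤ 5 * t + n * m := by
    have hc : n * d = d * n := Nat.mul_comm n d
    rw [hc] at step2
    linarith
  have hsplitt : t * n = t * (n - 5) + t * 5 := by
    rw [← Nat.mul_add]
    congr 1
    omega
  have key3 : n + t * (n - 5) ≤ n * m := by
    rw [hsplitt] at key
    linarith
  have tlow : (m + 1) * (n - 5) ≤ t * (n - 5) := Nat.mul_le_mul_right _ htm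
  have key4 : n + (m + 1) * (n - 5) ≤ n * m := le_trans (by linarith) key3
  have hn5 : 5 ≤ n := by omega
  have key5 : 2 * n ≤ 5 * m + 5 := by
    zify [hn5] at key4
    have hexp : (n : ℤ) + (m + 1) * (n - 5) = m * n + 2 * n - 5 * m - 5 := by ring
    rw [hexp] at key4
    have hnm : ((n : ℤ)) * m = m * n := by ring
    rw [hnm] at key4
    have : 2 * (n : ℤ) ≤ 5 * m + 5 := by linarith
    exact_mod_cast this
  have hoddn := Nat.odd_iff.1 hodd
  omega

end HellyAux

/-- for `m ≥ 3`, `d ≥ m`, a finite family of `m`-boxes in `ℝ^d` is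
2-pierceable iff every subfamily of cardinality `3m` (`m` odd) resp. `3m - 1`
(`m` even) is 2-pierceable. -/
theorem helly_two_piercing_m_boxes {ι : Type*} [Fintype ι] (m d : ℕ) (hm : 3 ≤ m)
    (hd : m ≤ d) (B : ι → Set (Fin d → ℝ)) (hB : ∀ i, IsPBoxIn m d (B i)) :
    Pierceable B 2 ↔
      ∀ S : Finset ι, S.card ≤ (if Odd m then 3 * m else 3 * m - 1) →
        PierceableOn B S 2 := by
  have hB' : ∀ i, ∃ lo hi : Fin d → ℝ, (∀ k, lo k ≤ hi k) ∧
      {k : Fin d | lo k = hi k}.ncard = d - m ∧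
      B i = {x | ∀ k, x k ∈ Set.Icc (lo k) (hi k)} := hB
  unfold Pierceable PierceableOn
  clear hB
  have hB := hB'
  classical
  constructor
  · rintro ⟨P, hP2, hP⟩ S _
    exact ⟨P, hP2, fun i _ => hP i⟩
  · intro hyp
    by_contra hnp
    -- choose interval data
    set lo : ι → Fin d → ℝ := fun i => (hB i).choose with hlodef
    have hspec : ∀ i, ∃ hi : Fin d → ℝ, (∀ k, lo i k ≤ hi k) ∧
        ({k : Fin d | lo i k = hi k}).ncard = d - m ∧
        B i = {x | ∀ k, x k ∈ Set.Icc (lo i k) (hi k)} := fun i => (hB i).choose_spec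
    set hi : ι → Fin d → ℝ := fun i => (hspec i).choose with hhidef
    have hle : ∀ i k, lo i k ≤ hi i k := fun i => (hspec i).choose_spec.1
    have hdeg : ∀ i, ({k : Fin d | lo i k = hi i k}).ncard = d - m :=
      fun i => (hspec i).choose_spec.2.1
    have hBeq : ∀ i, B i = {x | ∀ k, x k ∈ Set.Icc (lo i k) (hi i k)} :=
      fun i => (hspec i).choose_spec.2.2
    have hmem : ∀ i x, x ∈ B i ↔ ∀ k, lo i k ≤ x k ∧ x k ≤ hi i k := by
      intro i x
      rw [hBeq i]
      simp [Set.mem_setOf_eq, Set.mem_Icc]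
    have hBne : ∀ i, (B i).Nonempty :=
      fun i => ⟨lo i, (hmem i _).2 fun k => ⟨le_refl _, hle i k⟩⟩
    have hint : ∀ i j, (B i ∩ B j).Nonempty ↔
        ∀ k, lo i k ≤ hi j k ∧ lo j k ≤ hi i k := by
      intro i j
      constructor
      · rintro ⟨x, hxi, hxj⟩ k
        have h1 := (hmem i x).1 hxi k
        have h2 := (hmem j x).1 hxj k
        exact ⟨le_trans h1.1 h2.2, le_trans h2.1 h1.2⟩
      · intro h
        refine ⟨fun k => max (lo i k) (lo j k),
          (hmem i _).2 fun k => ⟨le_max_left _ _, ?_⟩,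
          (hmem j _).2 fun k => ⟨le_max_right _ _, ?_⟩⟩
        · exact max_le (hle i k) (h k).2
        · exact max_le (h k).1 (hle j k)
    -- a 2-coloring with intersecting color classes yields a 2-piercing
    have color_pierce : ∀ C : ι → Prop, (∀ i j, (C i ↔ C j) → (B i ∩ B j).Nonempty) →
        ∃ P : Finset (Fin d → ℝ), P.card ≤ 2 ∧ ∀ i, ∃ p ∈ P, p ∈ B i := by
      intro C hC
      have mkpt : ∀ S : Finset ι, (∀ i ∈ S, ∀ j ∈ S, (B i ∩ B j).Nonempty) →
          ∃ p : Fin d → ℝ, ∀ i ∈ S, p ∈ B i := by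
        intro S hS
        rcases S.eq_empty_or_nonempty with rfl | hSne
        · exact ⟨0, by simp⟩
        · refine ⟨fun k => S.sup' hSne (fun i => lo i k), ?_⟩
          intro i hiS
          refine (hmem i _).2 fun k => ⟨Finset.le_sup' (fun i => lo i k) hiS, ?_⟩
          refine Finset.sup'_le _ _ ?_
          intro j hjS
          exact ((hint j i).1 (hS j hjS i hiS) k).1
      obtain ⟨p1, hp1⟩ := mkpt (Finset.univ.filter C) (fun i hi2 j hj2 => hC i j (by
        simp only [Finset.mem_filter] at hi2 hj2
        exact iff_of_true hi2.2 hj2.2))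
      obtain ⟨p0, hp0⟩ := mkpt (Finset.univ.filter (fun i => ¬ C i)) (fun i hi2 j hj2 => hC i j (by
        simp only [Finset.mem_filter] at hi2 hj2
        exact iff_of_false hi2.2 hj2.2))
      refine ⟨{p1, p0}, le_trans (Finset.card_insert_le _ _) (by simp), ?_⟩
      intro i
      by_cases hCi : C i
      · exact ⟨p1, by simp, hp1 i (by simp [hCi])⟩
      · exact ⟨p0, by simp, hp0 i (by simp [hCi])⟩
    -- the disjointness graph
    have hsymB : Symmetric (fun i j : ι => i ≠ j ∧ ¬ (B i ∩ B j).Nonempty) := by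
      intro i j h
      refine ⟨h.1.symm, ?_⟩
      rw [Set.inter_comm]
      exact h.2
    have hirrB : Irreflexive (fun i j : ι => i ≠ j ∧ ¬ (B i ∩ B j).Nonempty) :=
      fun i h => h.1 rfl
    set G : SimpleGraph ι := ⟨fun i j => i ≠ j ∧ ¬ (B i ∩ B j).Nonempty, ⟨fun a b h => hsymB h⟩, ⟨fun a => hirrB a⟩⟩ with hGdef
    have hGadj : ∀ i j, G.Adj i j ↔ (i ≠ j ∧ ¬ (B i ∩ B j).Nonempty) := fun i j => Iff.rfl
    -- there must be an odd closed walk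
    have hocw : ∃ nn, HellyAux.IsOddCW G.Adj nn := by
      by_contra hno
      push_neg at hno
      apply hnp
      have hreach : ∀ i : ι, G.Reachable i (Quot.out (G.connectedComponentMk i)) :=
        fun i => SimpleGraph.ConnectedComponent.exact
          ((Quot.out_eq (G.connectedComponentMk i)).symm)
      let W : ∀ i : ι, G.Walk i (Quot.out (G.connectedComponentMk i)) := fun i => (hreach i).some
      apply color_pierce (fun i => Odd (W i).length)
      intro i j hij
      by_contra hnint
      have hne : i ≠ j := by
        rintro rfl
        apply hnint
        rw [Set.inter_self]
        exact hBne i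
      have hadj : G.Adj i j := ⟨hne, hnint⟩
      have hcomp : G.connectedComponentMk i = G.connectedComponentMk j :=
        SimpleGraph.ConnectedComponent.sound ⟨hadj.toWalk⟩
      have hr : Quot.out (G.connectedComponentMk j) = Quot.out (G.connectedComponentMk i) := by
        rw [hcomp]
      let chord : G.Walk j i := SimpleGraph.Walk.cons hadj.symm SimpleGraph.Walk.nil
      let closed : G.Walk i i :=
        (W i).append (((W j).reverse.copy hr rfl).append chord)
      have hlen : closed.length = (W i).length + ((W j).length + 1) := by
        simp [closed, chord, SimpleGraph.Walk.length_append, SimpleGraph.Walk.length_copy,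
          SimpleGraph.Walk.length_reverse]
      have hoddlen : Odd closed.length := by
        rw [hlen]
        have h1 : Odd (W i).length ↔ Odd (W j).length := hij
        rw [Nat.odd_iff] at *
        rw [Nat.odd_iff] at h1
        omega
      exact hno closed.length ⟨hoddlen, closed.getVert,
        by rw [SimpleGraph.Walk.getVert_length, SimpleGraph.Walk.getVert_zero],
        fun t ht => closed.adj_getVert_succ ht⟩
    -- extract an induced odd cycle
    obtain ⟨nn, hoddn, hn3, v, hv0, hvadj, hvdist, hvind⟩ :=
      HellyAux.exists_induced_odd_cycle G.Adj (fun i j h => h.symm) (fun i => G.loopless.irrefl i) hocw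
    haveI : NeZero nn := ⟨by omega⟩
    haveI : Fact (1 < nn) := ⟨by omega⟩
    set V : ZMod nn → ι := fun j => v j.val with hVdef
    have hval : ∀ j : ZMod nn, j.val < nn := fun j => ZMod.val_lt j
    have hone : (1 : ZMod nn).val = 1 := ZMod.val_one nn
    have hvalsucc : ∀ j : ZMod nn, (j + 1).val = (j.val + 1) % nn := by
      intro j
      rw [ZMod.val_add, hone]
    have hVadj : ∀ j : ZMod nn, G.Adj (V j) (V (j + 1)) := by
      intro j
      show G.Adj (v j.val) (v (j + 1).val)
      have hv := hval j
      by_cases hj : j.val + 1 < nn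
      · have h1 : (j + 1).val = j.val + 1 := by
          rw [hvalsucc j, Nat.mod_eq_of_lt hj]
        rw [h1]
        exact hvadj j.val (by omega)
      · have hj' : j.val = nn - 1 := by omega
        have h1 : (j + 1).val = 0 := by
          rw [hvalsucc j, hj', show nn - 1 + 1 = nn from by omega, Nat.mod_self]
        rw [h1, hj']
        have h2 := hvadj (nn - 1) (by omega)
        rwa [show nn - 1 + 1 = nn from by omega, hv0] at h2
    have hVinj : Function.Injective V := by
      intro a b hab
      by_contra hne
      have hab' : v a.val = v b.val := hab
      rcases Nat.lt_trichotomy a.val b.val with h | h | h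
      · exact hvdist a.val b.val h (hval b) hab'
      · exact hne (ZMod.val_injective nn h)
      · exact hvdist b.val a.val h (hval a) hab'.symm
    have hVfar : ∀ j j' : ZMod nn, j' ≠ j → j' ≠ j + 1 → j ≠ j' + 1 →
        (B (V j) ∩ B (V j')).Nonempty := by
      intro j j' h1 h2 h3
      have hvv : V j ≠ V j' := fun h => h1 (hVinj h).symm
      have key : ∀ x y : ZMod nn, x.val < y.val → y ≠ x → y ≠ x + 1 → x ≠ y + 1 →
          ¬ G.Adj (V x) (V y) := by
        intro x y hxy hn1 hn2 hn3 hadj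
        have hb : y.val < nn := hval y
        have hxn : x.val < nn := hval x
        have hd1 : y.val - x.val ≠ 1 := by
          intro h
          apply hn2
          apply ZMod.val_injective nn
          rw [hvalsucc x, Nat.mod_eq_of_lt (by omega)]
          omega
        have hd2 : y.val - x.val + 2 ≤ nn := by
          by_contra hcc
          apply hn3
          apply ZMod.val_injective nn
          rw [hvalsucc y]
          have hx0 : x.val = 0 := by omega
          have hy0 : y.val = nn - 1 := by omega
          rw [hx0, hy0, show nn - 1 + 1 = nn from by omega, Nat.mod_self]
        exact hvind x.val y.val hxy hb (by omega) hd2 hadj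
      by_contra hni
      have hnadj : ¬ G.Adj (V j) (V j') := by
        rcases Nat.lt_trichotomy j.val j'.val with h | h | h
        · exact key j j' h h1 h2 h3
        · exact absurd (ZMod.val_injective nn h) (fun hh => h1 hh.symm)
        · exact fun hadj => key j' j h (Ne.symm h1) h3 h2 hadj.symm
      exact hnadj ⟨hvv, hni⟩
    -- apply the geometric core
    have hconsZ : ∀ j : ZMod nn, ∃ k,
        hi (V j) k < lo (V (j + 1)) k ∨ hi (V (j + 1)) k < lo (V j) k := by
      intro j
      have h2 := (hVadj j).2
      rw [hint] at h2
      push_neg at h2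
      obtain ⟨k, hk⟩ := h2
      by_cases hA : lo (V j) k ≤ hi (V (j + 1)) k
      · exact ⟨k, Or.inl (hk hA)⟩
      · exact ⟨k, Or.inr (not_le.1 hA)⟩
    have hfarZ : ∀ j j' : ZMod nn, j' ≠ j → j' ≠ j + 1 → j ≠ j' + 1 →
        ∀ k, lo (V j) k ≤ hi (V j') k ∧ lo (V j') k ≤ hi (V j) k := by
      intro j j' h1 h2 h3
      exact (hint _ _).1 (hVfar j j' h1 h2 h3)
    have hb3m : nn ≤ 3 * m :=
      HellyAux.cycle_core hm hd hoddn hn3 (fun j => lo (V j)) (fun j => hi (V j))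
        (fun j k => hle (V j) k) (fun j => hdeg (V j)) hconsZ hfarZ
    have hbN : nn ≤ (if Odd m then 3 * m else 3 * m - 1) := by
      split_ifs with h
      · exact hb3m
      · have h1 := Nat.odd_iff.1 hoddn
        have h2 : m % 2 = 0 := by
          rcases Nat.even_or_odd m with he | ho
          · exact Nat.even_iff.1 he
          · exact absurd ho h
        omega
    -- pierce the cycle subfamily and derive a parity contradiction
    set S : Finset ι := Finset.univ.image V with hSdef
    have hScard : S.card = nn := by
      rw [hSdef, Finset.card_image_of_injective _ hVinj, Finset.card_univ, ZMod.card]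
    obtain ⟨P, hP2, hPc⟩ := hyp S (by rw [hScard]; exact hbN)
    obtain ⟨p, q, hpq⟩ := HellyAux.exists_pair P hP2
    have hcovers : ∀ t : ℕ, t < nn → (p ∈ B (v t) ∨ q ∈ B (v t)) := by
      intro t ht
      have hmemS : v t ∈ S := by
        rw [hSdef]
        refine Finset.mem_image.2 ⟨(t : ZMod nn), Finset.mem_univ _, ?_⟩
        show v ((t : ZMod nn)).val = v t
        rw [ZMod.val_cast_of_lt ht]
      obtain ⟨x, hxP, hxB⟩ := hPc (v t) hmemS
      rcases hpq x hxP with rfl | rfl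
      · exact Or.inl hxB
      · exact Or.inr hxB
    have hcovers' : ∀ t : ℕ, t ≤ nn → (p ∈ B (v t) ∨ q ∈ B (v t)) := by
      intro t ht
      rcases eq_or_lt_of_le ht with rfl | hlt
      · rw [hv0]; exact hcovers 0 (by omega)
      · exact hcovers t hlt
    have hflip : ∀ t : ℕ, t < nn → ((p ∈ B (v t)) ↔ ¬ p ∈ B (v (t + 1))) := by
      intro t ht
      have hdisj := (hvadj t ht).2
      constructor
      · exact fun h1 h2 => hdisj ⟨p, h1, h2⟩
      · intro h1
        rcases hcovers' t (by omega) with h | hq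
        · exact h
        · rcases hcovers' (t + 1) (by omega) with h | hq1
          · exact absurd h h1
          · exact absurd ⟨q, hq, hq1⟩ hdisj
    have hpar : ∀ t : ℕ, t ≤ nn → ((p ∈ B (v t)) ↔ (Even t ↔ p ∈ B (v 0))) := by
      intro t
      induction t with
      | zero => intro _; simp
      | succ s ihs =>
        intro hs
        have h1 := ihs (by omega)
        have h2 := hflip s (by omega)
        rw [Nat.even_add_one]
        tauto
    have hend := hpar nn le_rfl
    rw [hv0] at hend
    have hnotE : ¬ Even nn := by
      rw [Nat.even_iff]
      have := Nat.odd_iff.1 hoddn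
      omega
    tauto
end

section
/- The graph of the 3-dimensional cube (vertices = the 12 edges of the cube, adjacency = sharing a point) has boxicity 2 but 1-boxicity 3: it is realizable as axis-parallel rectangles in ℝ² and as axis-parallel segments in ℝ³, but not as axis-parallel segments in ℝ². -/
open Set

/-- The edge of the unit cube in direction `e.1`, at position `(e.2.1, e.2.2)` on the
two other (cyclically following) axes. -/
def cubeSeg (e : Fin 3 × Fin 2 × Fin 2) : Set (Fin 3 → ℝ) :=
  {x | x e.1 ∈ Set.Icc (0 : ℝ) 1 ∧ x (e.1 + 1) = ((e.2.1 : ℕ) : ℝ) ∧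
    x (e.1 + 2) = ((e.2.2 : ℕ) : ℝ)}

/-- The intersection graph of the 12 edges of the unit cube `[0,1]³`. -/
def CubeGraph : SimpleGraph (Fin 3 × Fin 2 × Fin 2) :=
  SimpleGraph.fromRel fun e f => (cubeSeg e ∩ cubeSeg f).Nonempty


/-! ### Auxiliary lemmas -/

lemma box_inter {d : ℕ} {lo1 hi1 lo2 hi2 : Fin d → ℝ} (h1 : ∀ i, lo1 i ≤ hi1 i)
    (h2 : ∀ i, lo2 i ≤ hi2 i) :
    ({x : Fin d → ℝ | ∀ i, x i ∈ Set.Icc (lo1 i) (hi1 i)} ∩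
      {x | ∀ i, x i ∈ Set.Icc (lo2 i) (hi2 i)}).Nonempty
    ↔ ∀ i, lo1 i ≤ hi2 i ∧ lo2 i ≤ hi1 i := by
  constructor
  · rintro ⟨x, hx1, hx2⟩ i
    exact ⟨(hx1 i).1.trans (hx2 i).2, (hx2 i).1.trans (hx1 i).2⟩
  · intro h
    exact ⟨fun i => max (lo1 i) (lo2 i),
      fun i => ⟨le_max_left _ _, max_le (h1 i) (h i).2⟩,
      fun i => ⟨le_max_right _ _, max_le (h i).1 (h2 i)⟩⟩

lemma fin2_deg {lo hi : Fin 2 → ℝ} (h : ∃ a, {i : Fin 2 | lo i = hi i} = {a}) :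
    lo 0 = hi 0 ∨ lo 1 = hi 1 := by
  obtain ⟨a, ha⟩ := h
  have hm : a ∈ {i : Fin 2 | lo i = hi i} := by rw [ha]; exact rfl
  fin_cases a
  · exact Or.inl hm
  · exact Or.inr hm

lemma fin2_cast_mem (c : Fin 2) : ((c : ℕ) : ℝ) ∈ Set.Icc (0:ℝ) 1 := by
  fin_cases c <;> norm_num

lemma fin2_cast_inj {a b : Fin 2} (h : ((a:ℕ):ℝ) = ((b:ℕ):ℝ)) : a = b := by
  fin_cases a <;> fin_cases b <;> first | rfl | norm_num at h

lemma cubeSeg_step (d : Fin 3) (a b a' b' : Fin 2) :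
    (cubeSeg (d, a, b) ∩ cubeSeg (d + 1, a', b')).Nonempty ↔ a' = b := by
  have h1 : d + 1 + 1 = d + 2 := by revert d; decide
  have h2 : d + 1 + 2 = d := by revert d; decide
  have c1 : d ≠ d + 1 := by revert d; decide
  have c2 : d ≠ d + 2 := by revert d; decide
  have c3 : d + 2 ≠ d + 1 := by revert d; decide
  have c4 : d + 1 ≠ d + 2 := by revert d; decide
  constructor
  · rintro ⟨x, ⟨_, hx1, hx2⟩, ⟨_, hy1, hy2⟩⟩
    simp only at hx2 hy1
    rw [h1] at hy1
    exact fin2_cast_inj (by rw [← hy1, hx2])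
  · rintro rfl
    refine ⟨fun i => if i = d + 1 then ((a:ℕ):ℝ) else if i = d + 2 then ((a':ℕ):ℝ)
      else ((b':ℕ):ℝ), ⟨?_, ?_, ?_⟩, ⟨?_, ?_, ?_⟩⟩ <;>
      simp only [h1, h2, eq_self_iff_true, if_true, if_neg c1, if_neg c2, if_neg c3,
        if_neg c4] <;>
      first
        | rfl
        | apply fin2_cast_mem

def SegRel (e f : Fin 3 × Fin 2 × Fin 2) : Prop :=
  if e.1 = f.1 then e = f else if f.1 = e.1 + 1 then f.2.1 = e.2.2 else e.2.1 = f.2.2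

instance (e f : Fin 3 × Fin 2 × Fin 2) : Decidable (SegRel e f) := by
  unfold SegRel; infer_instance

lemma cubeSeg_self (e : Fin 3 × Fin 2 × Fin 2) : (cubeSeg e).Nonempty := by
  obtain ⟨d, a, b⟩ := e
  have c1 : d ≠ d + 1 := by revert d; decide
  have c2 : d ≠ d + 2 := by revert d; decide
  have c3 : d + 2 ≠ d + 1 := by revert d; decide
  refine ⟨fun i => if i = d + 1 then ((a:ℕ):ℝ) else if i = d + 2 then ((b:ℕ):ℝ) else 0,
    ?_, ?_, ?_⟩ <;>
    simp only [eq_self_iff_true, if_true, if_neg c1, if_neg c2, if_neg c3] <;>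
    first
      | rfl
      | norm_num

lemma cubeSeg_inter_iff (e f : Fin 3 × Fin 2 × Fin 2) :
    (cubeSeg e ∩ cubeSeg f).Nonempty ↔ SegRel e f := by
  obtain ⟨d, a, b⟩ := e
  obtain ⟨d', a', b'⟩ := f
  have tri : d' = d ∨ d' = d + 1 ∨ d = d' + 1 := by revert d d'; decide
  rcases tri with rfl | rfl | h
  · have := cubeSeg_self (d', a, b)
    constructor
    · rintro ⟨x, ⟨_, hx1, hx2⟩, ⟨_, hy1, hy2⟩⟩
      simp only at hx1 hx2 hy1 hy2
      have ha : a = a' := fin2_cast_inj (by rw [← hx1, hy1])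
      have hb : b = b' := fin2_cast_inj (by rw [← hx2, hy2])
      simp [SegRel, ha, hb]
    · intro hr
      simp only [SegRel, if_pos rfl] at hr
      rw [← hr]
      simpa [Set.inter_self] using this
  · rw [cubeSeg_step]
    have c1 : d ≠ d + 1 := by revert d; decide
    simp [SegRel, c1]
  · subst h
    rw [Set.inter_comm, cubeSeg_step]
    have c1 : d' + 1 ≠ d' := by revert d'; decide
    have c2 : d' ≠ d' + 1 + 1 := by revert d'; decide
    simp [SegRel, c1, c2]

lemma cube_adj (e f : Fin 3 × Fin 2 × Fin 2) :
    CubeGraph.Adj e f ↔ e ≠ f ∧ (SegRel e f ∨ SegRel f e) := by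
  rw [CubeGraph, SimpleGraph.fromRel_adj, cubeSeg_inter_iff, cubeSeg_inter_iff]

def NEh (lo1 hi1 lo2 hi2 : Fin 2 → ℝ) : Prop :=
  ∀ i, lo1 i ≤ hi2 i ∧ lo2 i ≤ hi1 i

lemma face_core {loA hiA loB hiB loC hiC loD hiD : Fin 2 → ℝ}
    (mA : ∀ i, loA i ≤ hiA i) (mB : ∀ i, loB i ≤ hiB i)
    (mC : ∀ i, loC i ≤ hiC i) (mD : ∀ i, loD i ≤ hiD i)
    (nAB : NEh loA hiA loB hiB) (nBC : NEh loB hiB loC hiC)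
    (nCD : NEh loC hiC loD hiD) (nDA : NEh loD hiD loA hiA)
    (kAC : ¬ NEh loA hiA loC hiC) (kBD : ¬ NEh loB hiB loD hiD)
    (degB : loB 0 = hiB 0 ∨ loB 1 = hiB 1)
    (degC : loC 0 = hiC 0 ∨ loC 1 = hiC 1)
    (degAD : (loA 0 = hiA 0 ∧ loD 0 = hiD 0) ∨ (loA 1 = hiA 1 ∧ loD 1 = hiD 1)) : False := by
  simp only [NEh, Fin.forall_fin_two, not_and_or, not_le] at nAB nBC nCD nDA kAC kBD
  obtain ⟨⟨nAB1, nAB2⟩, nAB3, nAB4⟩ := nAB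
  obtain ⟨⟨nBC1, nBC2⟩, nBC3, nBC4⟩ := nBC
  obtain ⟨⟨nCD1, nCD2⟩, nCD3, nCD4⟩ := nCD
  obtain ⟨⟨nDA1, nDA2⟩, nDA3, nDA4⟩ := nDA
  have mA0 := mA 0; have mA1 := mA 1
  have mB0 := mB 0; have mB1 := mB 1
  have mC0 := mC 0; have mC1 := mC 1
  have mD0 := mD 0; have mD1 := mD 1
  rcases degAD with ⟨e1, e2⟩ | ⟨e1, e2⟩ <;> rcases degB with e3 | e3 <;>
    rcases degC with e4 | e4 <;>
    rcases kAC with (h5 | h5) | (h5 | h5) <;>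
    rcases kBD with (h6 | h6) | (h6 | h6) <;>
    linarith

lemma c4_interval {a1 a2 b1 b2 c1 c2 d1 d2 : ℝ}
    (nAB : a1 ≤ b2 ∧ b1 ≤ a2) (nBC : b1 ≤ c2 ∧ c1 ≤ b2)
    (nCD : c1 ≤ d2 ∧ d1 ≤ c2) (nDA : d1 ≤ a2 ∧ a1 ≤ d2)
    (kAC : ¬(a1 ≤ c2 ∧ c1 ≤ a2)) (kBD : ¬(b1 ≤ d2 ∧ d1 ≤ b2)) : False := by
  simp only [not_and_or, not_le] at kAC kBD
  obtain ⟨u1, u2⟩ := nAB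
  obtain ⟨u3, u4⟩ := nBC
  obtain ⟨u5, u6⟩ := nCD
  obtain ⟨u7, u8⟩ := nDA
  rcases kAC with h | h <;> rcases kBD with h' | h' <;> linarith


lemma cubeSeg_isPBox (e : Fin 3 × Fin 2 × Fin 2) : IsPBoxIn 1 3 (cubeSeg e) := by
  obtain ⟨d, a, b⟩ := e
  have c1 : d + 1 ≠ d := by revert d; decide
  have c2 : d + 2 ≠ d := by revert d; decide
  have c3 : d + 2 ≠ d + 1 := by revert d; decide
  have c4 : d + 1 ≠ d + 2 := by revert d; decide
  have tri : ∀ i : Fin 3, i = d ∨ i = d + 1 ∨ i = d + 2 := by revert d; decide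
  refine ⟨fun i => if i = d then 0 else if i = d + 1 then ((a:ℕ):ℝ) else ((b:ℕ):ℝ),
    fun i => if i = d then 1 else if i = d + 1 then ((a:ℕ):ℝ) else ((b:ℕ):ℝ), ?_, ?_, ?_⟩
  · intro i
    rcases tri i with rfl | rfl | rfl <;>
      simp only [eq_self_iff_true, if_true, if_neg c1, if_neg c2, if_neg c3] <;> norm_num
  · have : {i : Fin 3 | (if i = d then (0:ℝ) else if i = d + 1 then ((a:ℕ):ℝ) else ((b:ℕ):ℝ))
        = (if i = d then 1 else if i = d + 1 then ((a:ℕ):ℝ) else ((b:ℕ):ℝ))} = {d + 1, d + 2} := by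
      ext i
      rcases tri i with rfl | rfl | rfl <;>
        simp only [Set.mem_setOf_eq, eq_self_iff_true, if_true, if_neg c1, if_neg c2, if_neg c3,
          Set.mem_insert_iff, Set.mem_singleton_iff]
      · constructor
        · intro h; norm_num at h
        · rintro (h | h)
          exacts [absurd h.symm c1, absurd h.symm c2]
      · simp
      · simp
    rw [this, Set.ncard_pair c4]
  · ext x
    simp only [cubeSeg, Set.mem_setOf_eq]
    constructor
    · rintro ⟨hx, h1, h2⟩ i
      rcases tri i with rfl | rfl | rfl <;>
        simp only [eq_self_iff_true, if_true, if_neg c1, if_neg c2, if_neg c3, h1, h2,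
          Set.mem_Icc] <;>
        first
          | exact hx
          | exact ⟨le_refl _, le_refl _⟩
    · intro h
      have hd := h d
      have h1 := h (d + 1)
      have h2 := h (d + 2)
      simp only [eq_self_iff_true, if_true, if_neg c1, if_neg c2, if_neg c3,
        Set.mem_Icc] at hd h1 h2
      exact ⟨hd, le_antisymm h1.2 h1.1, le_antisymm h2.2 h2.1⟩

theorem cube_real3 : RealizableAsPBoxes 1 3 CubeGraph := by
  refine ⟨cubeSeg, cubeSeg_isPBox, fun u v huv => ?_⟩
  rw [CubeGraph, SimpleGraph.fromRel_adj]
  constructor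
  · rintro ⟨_, h | h⟩
    · exact h
    · rwa [Set.inter_comm]
  · intro h
    exact ⟨huv, Or.inl h⟩

def rectData : Fin 3 × Fin 2 × Fin 2 → ℕ × ℕ × ℕ × ℕ := fun v =>
  if v = (0, 0, 0) then (2, 8, 2, 2)
  else if v = (0, 0, 1) then (2, 8, 8, 8)
  else if v = (0, 1, 0) then (3, 7, 4, 5)
  else if v = (0, 1, 1) then (4, 7, 7, 7)
  else if v = (1, 0, 0) then (2, 4, 2, 6)
  else if v = (1, 0, 1) then (6, 8, 0, 4)
  else if v = (1, 1, 0) then (2, 5, 7, 8)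
  else if v = (1, 1, 1) then (6, 8, 6, 8)
  else if v = (2, 0, 0) then (1, 2, 0, 8)
  else if v = (2, 0, 1) then (3, 4, 5, 7)
  else if v = (2, 1, 0) then (8, 8, 1, 8)
  else (7, 7, 3, 7)

def rl (v : Fin 3 × Fin 2 × Fin 2) (i : Fin 2) : ℕ :=
  if i = 0 then (rectData v).1 else (rectData v).2.2.1

def rh (v : Fin 3 × Fin 2 × Fin 2) (i : Fin 2) : ℕ :=
  if i = 0 then (rectData v).2.1 else (rectData v).2.2.2

lemma rect_le : ∀ (v : Fin 3 × Fin 2 × Fin 2) (i : Fin 2), (rl v i : ℝ) ≤ (rh v i : ℝ) := by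
  have h : ∀ v i, rl v i ≤ rh v i := by decide
  intro v i
  exact_mod_cast h v i

theorem cube_real2 : RealizableAsBoxes 2 CubeGraph := by
  refine ⟨fun v => {x | ∀ i, x i ∈ Set.Icc ((rl v i : ℝ)) ((rh v i : ℝ))},
    fun v => ⟨fun i => (rl v i : ℝ), fun i => (rh v i : ℝ), rect_le v, rfl⟩,
    fun u v huv => ?_⟩
  rw [cube_adj, box_inter (rect_le u) (rect_le v)]
  simp only [Fin.forall_fin_two, Nat.cast_le]
  have key : ∀ u v : Fin 3 × Fin 2 × Fin 2, u ≠ v →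
      ((u ≠ v ∧ (SegRel u v ∨ SegRel v u)) ↔
        ((rl u 0 ≤ rh v 0 ∧ rl v 0 ≤ rh u 0) ∧ (rl u 1 ≤ rh v 1 ∧ rl v 1 ≤ rh u 1))) := by
    decide
  exact key u v huv

theorem cube_not_box0 : ¬ RealizableAsBoxes 0 CubeGraph := by
  rintro ⟨B, hbox, hadj⟩
  obtain ⟨lo1, hi1, m1, E1⟩ := hbox (0, 0, 0)
  obtain ⟨lo2, hi2, m2, E2⟩ := hbox (0, 1, 0)
  have hne : (B (0, 0, 0) ∩ B (0, 1, 0)).Nonempty := by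
    refine ⟨fun i => i.elim0, ?_, ?_⟩
    · rw [E1]; exact fun i => i.elim0
    · rw [E2]; exact fun i => i.elim0
  have := (hadj _ _ (by decide)).mpr hne
  rw [cube_adj] at this
  revert this
  decide

theorem cube_not_box1 : ¬ RealizableAsBoxes 1 CubeGraph := by
  rintro ⟨B, hbox, hadj⟩
  obtain ⟨l1, h1, m1, E1⟩ := hbox (0, 0, 0)
  obtain ⟨l4, h4, m4, E4⟩ := hbox (1, 0, 1)
  obtain ⟨l5, h5, m5, E5⟩ := hbox (0, 1, 0)
  obtain ⟨l2, h2, m2, E2⟩ := hbox (1, 0, 0)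
  have n14 := ((box_inter m1 m4).mp (by
    rw [← E1, ← E4]
    exact (hadj _ _ (by decide)).mp ((cube_adj _ _).mpr (by decide)))) 0
  have n45 := ((box_inter m4 m5).mp (by
    rw [← E4, ← E5]
    exact (hadj _ _ (by decide)).mp ((cube_adj _ _).mpr (by decide)))) 0
  have n52 := ((box_inter m5 m2).mp (by
    rw [← E5, ← E2]
    exact (hadj _ _ (by decide)).mp ((cube_adj _ _).mpr (by decide)))) 0
  have n21 := ((box_inter m2 m1).mp (by
    rw [← E2, ← E1]
    exact (hadj _ _ (by decide)).mp ((cube_adj _ _).mpr (by decide)))) 0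
  have k15 : ¬ (l1 0 ≤ h5 0 ∧ l5 0 ≤ h1 0) := fun hn =>
    (by rw [cube_adj]; decide : ¬ CubeGraph.Adj ((0,0,0) : Fin 3 × Fin 2 × Fin 2) (0,1,0))
      ((hadj _ _ (by decide)).mpr (by
        rw [E1, E5]
        exact (box_inter m1 m5).mpr (fun i => by fin_cases i <;> exact hn)))
  have k42 : ¬ (l4 0 ≤ h2 0 ∧ l2 0 ≤ h4 0) := fun hn =>
    (by rw [cube_adj]; decide : ¬ CubeGraph.Adj ((1,0,1) : Fin 3 × Fin 2 × Fin 2) (1,0,0))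
      ((hadj _ _ (by decide)).mpr (by
        rw [E4, E2]
        exact (box_inter m4 m2).mpr (fun i => by fin_cases i <;> exact hn)))
  exact c4_interval n14 n45 n52 n21 k15 k42

theorem cube_not_pbox1 : ¬ RealizableAsPBoxes 1 1 CubeGraph := by
  rintro ⟨B, hbox, hadj⟩
  refine cube_not_box1 ⟨B, fun v => ?_, hadj⟩
  obtain ⟨lo, hi, m, _, E⟩ := hbox v
  exact ⟨lo, hi, m, E⟩

theorem cube_not_pbox2 : ¬ RealizableAsPBoxes 1 2 CubeGraph := by
  rintro ⟨B, hbox, hadj⟩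
  obtain ⟨l1, h1, m1, c1, E1⟩ := hbox (0,0,0)
  obtain ⟨l2, h2, m2, c2, E2⟩ := hbox (1,0,0)
  obtain ⟨l3, h3, m3, c3, E3⟩ := hbox (2,0,0)
  obtain ⟨l4, h4, m4, c4, E4⟩ := hbox (1,0,1)
  obtain ⟨l5, h5, m5, c5, E5⟩ := hbox (0,1,0)
  obtain ⟨l6, h6, m6, c6, E6⟩ := hbox (2,1,0)
  obtain ⟨l7, h7, m7, c7, E7⟩ := hbox (0,0,1)
  obtain ⟨l8, h8, m8, c8, E8⟩ := hbox (2,0,1)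
  obtain ⟨l9, h9, m9, c9, E9⟩ := hbox (1,1,0)
  norm_num at c1 c2 c3 c4 c5 c6 c7 c8 c9
  have d1 := fin2_deg (c1.elim (fun h => ⟨0, h⟩) (fun h => ⟨1, h⟩))
  have d2 := fin2_deg (c2.elim (fun h => ⟨0, h⟩) (fun h => ⟨1, h⟩))
  have d3 := fin2_deg (c3.elim (fun h => ⟨0, h⟩) (fun h => ⟨1, h⟩))
  have d4 := fin2_deg (c4.elim (fun h => ⟨0, h⟩) (fun h => ⟨1, h⟩))
  have d5 := fin2_deg (c5.elim (fun h => ⟨0, h⟩) (fun h => ⟨1, h⟩))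
  have d6 := fin2_deg (c6.elim (fun h => ⟨0, h⟩) (fun h => ⟨1, h⟩))
  have d7 := fin2_deg (c7.elim (fun h => ⟨0, h⟩) (fun h => ⟨1, h⟩))
  have d8 := fin2_deg (c8.elim (fun h => ⟨0, h⟩) (fun h => ⟨1, h⟩))
  have d9 := fin2_deg (c9.elim (fun h => ⟨0, h⟩) (fun h => ⟨1, h⟩))
  have n14 : NEh l1 h1 l4 h4 := (box_inter m1 m4).mp (by
    rw [← E1, ← E4]; exact (hadj _ _ (by decide)).mp ((cube_adj _ _).mpr (by decide)))
  have n45 : NEh l4 h4 l5 h5 := (box_inter m4 m5).mp (by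
    rw [← E4, ← E5]; exact (hadj _ _ (by decide)).mp ((cube_adj _ _).mpr (by decide)))
  have n52 : NEh l5 h5 l2 h2 := (box_inter m5 m2).mp (by
    rw [← E5, ← E2]; exact (hadj _ _ (by decide)).mp ((cube_adj _ _).mpr (by decide)))
  have n21 : NEh l2 h2 l1 h1 := (box_inter m2 m1).mp (by
    rw [← E2, ← E1]; exact (hadj _ _ (by decide)).mp ((cube_adj _ _).mpr (by decide)))
  have n16 : NEh l1 h1 l6 h6 := (box_inter m1 m6).mp (by
    rw [← E1, ← E6]; exact (hadj _ _ (by decide)).mp ((cube_adj _ _).mpr (by decide)))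
  have n67 : NEh l6 h6 l7 h7 := (box_inter m6 m7).mp (by
    rw [← E6, ← E7]; exact (hadj _ _ (by decide)).mp ((cube_adj _ _).mpr (by decide)))
  have n73 : NEh l7 h7 l3 h3 := (box_inter m7 m3).mp (by
    rw [← E7, ← E3]; exact (hadj _ _ (by decide)).mp ((cube_adj _ _).mpr (by decide)))
  have n31 : NEh l3 h3 l1 h1 := (box_inter m3 m1).mp (by
    rw [← E3, ← E1]; exact (hadj _ _ (by decide)).mp ((cube_adj _ _).mpr (by decide)))
  have n28 : NEh l2 h2 l8 h8 := (box_inter m2 m8).mp (by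
    rw [← E2, ← E8]; exact (hadj _ _ (by decide)).mp ((cube_adj _ _).mpr (by decide)))
  have n89 : NEh l8 h8 l9 h9 := (box_inter m8 m9).mp (by
    rw [← E8, ← E9]; exact (hadj _ _ (by decide)).mp ((cube_adj _ _).mpr (by decide)))
  have n93 : NEh l9 h9 l3 h3 := (box_inter m9 m3).mp (by
    rw [← E9, ← E3]; exact (hadj _ _ (by decide)).mp ((cube_adj _ _).mpr (by decide)))
  have n32 : NEh l3 h3 l2 h2 := (box_inter m3 m2).mp (by
    rw [← E3, ← E2]; exact (hadj _ _ (by decide)).mp ((cube_adj _ _).mpr (by decide)))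
  have k15 : ¬ NEh l1 h1 l5 h5 := fun hn =>
    (by rw [cube_adj]; decide : ¬ CubeGraph.Adj (0,0,0) (0,1,0))
      ((hadj _ _ (by decide)).mpr (by rw [E1, E5]; exact (box_inter m1 m5).mpr hn))
  have k42 : ¬ NEh l4 h4 l2 h2 := fun hn =>
    (by rw [cube_adj]; decide : ¬ CubeGraph.Adj (1,0,1) (1,0,0))
      ((hadj _ _ (by decide)).mpr (by rw [E4, E2]; exact (box_inter m4 m2).mpr hn))
  have k17 : ¬ NEh l1 h1 l7 h7 := fun hn =>
    (by rw [cube_adj]; decide : ¬ CubeGraph.Adj (0,0,0) (0,0,1))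
      ((hadj _ _ (by decide)).mpr (by rw [E1, E7]; exact (box_inter m1 m7).mpr hn))
  have k63 : ¬ NEh l6 h6 l3 h3 := fun hn =>
    (by rw [cube_adj]; decide : ¬ CubeGraph.Adj (2,1,0) (2,0,0))
      ((hadj _ _ (by decide)).mpr (by rw [E6, E3]; exact (box_inter m6 m3).mpr hn))
  have k29 : ¬ NEh l2 h2 l9 h9 := fun hn =>
    (by rw [cube_adj]; decide : ¬ CubeGraph.Adj (1,0,0) (1,1,0))
      ((hadj _ _ (by decide)).mpr (by rw [E2, E9]; exact (box_inter m2 m9).mpr hn))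
  have k83 : ¬ NEh l8 h8 l3 h3 := fun hn =>
    (by rw [cube_adj]; decide : ¬ CubeGraph.Adj (2,0,1) (2,0,0))
      ((hadj _ _ (by decide)).mpr (by rw [E8, E3]; exact (box_inter m8 m3).mpr hn))
  have face1 : ¬ ((l1 0 = h1 0 ∧ l2 0 = h2 0) ∨ (l1 1 = h1 1 ∧ l2 1 = h2 1)) :=
    fun dAD => face_core m1 m4 m5 m2 n14 n45 n52 n21 k15 k42 d4 d5 dAD
  have face2 : ¬ ((l1 0 = h1 0 ∧ l3 0 = h3 0) ∨ (l1 1 = h1 1 ∧ l3 1 = h3 1)) :=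
    fun dAD => face_core m1 m6 m7 m3 n16 n67 n73 n31 k17 k63 d6 d7 dAD
  have face3 : ¬ ((l2 0 = h2 0 ∧ l3 0 = h3 0) ∨ (l2 1 = h2 1 ∧ l3 1 = h3 1)) :=
    fun dAD => face_core m2 m8 m9 m3 n28 n89 n93 n32 k29 k83 d8 d9 dAD
  rcases d1 with e1 | e1 <;> rcases d2 with e2 | e2 <;> rcases d3 with e3 | e3
  · exact face1 (Or.inl ⟨e1, e2⟩)
  · exact face1 (Or.inl ⟨e1, e2⟩)
  · exact face2 (Or.inl ⟨e1, e3⟩)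
  · exact face3 (Or.inr ⟨e2, e3⟩)
  · exact face3 (Or.inl ⟨e2, e3⟩)
  · exact face2 (Or.inr ⟨e1, e3⟩)
  · exact face1 (Or.inr ⟨e1, e2⟩)
  · exact face1 (Or.inr ⟨e1, e2⟩)

/-- the cube graph has boxicity 2 and 1-boxicity 3: realizable as boxes
in `ℝ²` and segments in `ℝ³`, but not as segments in `ℝ²`. -/
theorem cube_graph_boxicity :
    boxicity CubeGraph = 2 ∧ pboxicity 1 CubeGraph = 3 ∧
    RealizableAsBoxes 2 CubeGraph ∧ RealizableAsPBoxes 1 3 CubeGraph ∧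
    ¬ RealizableAsPBoxes 1 2 CubeGraph := by
  refine ⟨?_, ?_, cube_real2, cube_real3, cube_not_pbox2⟩
  · apply le_antisymm
    · exact sInf_le ⟨2, by norm_num, cube_real2⟩
    · apply le_sInf
      rintro b ⟨k, rfl, hk⟩
      have h2 : 2 ≤ k := by
        by_contra h
        push_neg at h
        interval_cases k
        · exact cube_not_box0 hk
        · exact cube_not_box1 hk
      exact_mod_cast h2
  · apply le_antisymm
    · exact sInf_le ⟨3, by norm_num, by norm_num, cube_real3⟩
    · apply le_sInf
      rintro b ⟨k, rfl, hk1, hk⟩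
      have h3 : 3 ≤ k := by
        by_contra h
        push_neg at h
        interval_cases k
        · exact cube_not_pbox1 hk
        · exact cube_not_pbox2 hk
      exact_mod_cast h3
end
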